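/- arXiv:2103.16377 — 4 statements merged into one kernel-verified Lean document; each statement's English description precedes it below -/
import Mathlib

section
/- Let (Ω, P) be a probability space and E a real inner product space. Let M ≥ 1 and let X_0, …, X_{M−1} : Ω → E be measurable random vectors with ‖X_i‖ ≤ H almost surely for a constant H ≥ 0. Suppose there are constants Λ ≥ 0 and ρ ∈ [0,1) such that for all i ≠ j one has E⟨X_i, X_j⟩ ≤ Λ ρ^{|i−j|} H². Then E‖(1/M) ∑_{i=0}^{M−1} X_i‖² ≤ (H²/M) (1 + 2Λρ/(1−ρ)). -/
open MeasureTheory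
open scoped RealInnerProductSpace

open Finset in
lemma geom_tail_le' {ρ : ℝ} (hρ0 : 0 ≤ ρ) (hρ1 : ρ < 1) (n : ℕ) :
    ∑ k ∈ Finset.range n, ρ ^ (k + 1) ≤ ρ / (1 - ρ) := by
  have hs : Summable (fun k : ℕ => ρ ^ k) := summable_geometric_of_lt_one hρ0 hρ1
  have h1 : ∑ k ∈ Finset.range n, ρ ^ (k+1) = ρ * ∑ k ∈ Finset.range n, ρ ^ k := by
    rw [Finset.mul_sum]; exact Finset.sum_congr rfl fun k _ => by ring
  have h2 : ∑ k ∈ Finset.range n, ρ ^ k ≤ (1 - ρ)⁻¹ := by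
    calc ∑ k ∈ Finset.range n, ρ ^ k ≤ ∑' k : ℕ, ρ ^ k :=
          Summable.sum_le_tsum _ (fun k _ => pow_nonneg hρ0 k) hs
      _ = (1 - ρ)⁻¹ := tsum_geometric_of_lt_one hρ0 hρ1
  rw [h1, div_eq_mul_inv]
  exact mul_le_mul_of_nonneg_left h2 hρ0

lemma row_sum_le' {M : ℕ} {ρ : ℝ} (hρ0 : 0 ≤ ρ) (hρ1 : ρ < 1) (i : Fin M) :
    ∑ j ∈ Finset.univ.erase i, ρ ^ ((i : ℤ) - (j : ℤ)).natAbs ≤ 2 * ρ / (1 - ρ) := by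
  classical
  set a := (i : ℕ) with ha
  have haM : a < M := i.isLt
  have hsplit : (Finset.univ.erase i : Finset (Fin M)) =
      (Finset.univ.filter (fun j : Fin M => (j : ℕ) < a)) ∪
      (Finset.univ.filter (fun j : Fin M => a < (j : ℕ))) := by
    ext j
    simp only [Finset.mem_erase, Finset.mem_union, Finset.mem_filter, Finset.mem_univ,
      true_and, and_true, Fin.ext_iff, ← ha]
    omega
  have hdisj : Disjoint (Finset.univ.filter (fun j : Fin M => (j : ℕ) < a))
      (Finset.univ.filter (fun j : Fin M => a < (j : ℕ))) := by
    simp only [Finset.disjoint_left, Finset.mem_filter, Finset.mem_univ, true_and]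
    intro j h1 h2
    omega
  rw [hsplit, Finset.sum_union hdisj]
  have hlow : ∑ j ∈ Finset.univ.filter (fun j : Fin M => (j : ℕ) < a),
      ρ ^ ((i : ℤ) - (j : ℤ)).natAbs ≤ ρ / (1 - ρ) := by
    have e1 : ∑ j ∈ Finset.univ.filter (fun j : Fin M => (j : ℕ) < a),
        ρ ^ ((i : ℤ) - (j : ℤ)).natAbs
        = ∑ k ∈ Finset.range M, (if k < a then ρ ^ (a - k) else 0) := by
      rw [Finset.sum_filter, Fin.sum_univ_eq_sum_range
        (fun k => if k < a then ρ ^ ((i : ℤ) - (k : ℤ)).natAbs else 0)]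
      refine Finset.sum_congr rfl fun k hk => ?_
      by_cases h : k < a
      · simp only [h, if_true]
        congr 1
        omega
      · simp [h]
    have e2 : ∑ k ∈ Finset.range M, (if k < a then ρ ^ (a - k) else 0)
        = ∑ k ∈ Finset.range a, ρ ^ (a - k) := by
      rw [← Finset.sum_filter]
      apply Finset.sum_congr _ fun _ _ => rfl
      ext k
      simp only [Finset.mem_filter, Finset.mem_range]
      omega
    have e3 : ∑ k ∈ Finset.range a, ρ ^ (a - k) = ∑ k ∈ Finset.range a, ρ ^ (k + 1) := by
      rw [← Finset.sum_range_reflect (fun k => ρ ^ (k + 1)) a]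
      refine Finset.sum_congr rfl fun k hk => ?_
      rw [Finset.mem_range] at hk
      congr 1
      omega
    rw [e1, e2, e3]
    exact geom_tail_le' hρ0 hρ1 a
  have hhigh : ∑ j ∈ Finset.univ.filter (fun j : Fin M => a < (j : ℕ)),
      ρ ^ ((i : ℤ) - (j : ℤ)).natAbs ≤ ρ / (1 - ρ) := by
    have e1 : ∑ j ∈ Finset.univ.filter (fun j : Fin M => a < (j : ℕ)),
        ρ ^ ((i : ℤ) - (j : ℤ)).natAbs
        = ∑ k ∈ Finset.range M, (if a < k then ρ ^ (k - a) else 0) := by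
      rw [Finset.sum_filter, Fin.sum_univ_eq_sum_range
        (fun k => if a < k then ρ ^ ((i : ℤ) - (k : ℤ)).natAbs else 0)]
      refine Finset.sum_congr rfl fun k hk => ?_
      by_cases h : a < k
      · simp only [h, if_true]
        congr 1
        omega
      · simp [h]
    have e2 : ∑ k ∈ Finset.range M, (if a < k then ρ ^ (k - a) else 0)
        = ∑ k ∈ Finset.Ico (a + 1) M, ρ ^ (k - a) := by
      rw [← Finset.sum_filter]
      apply Finset.sum_congr _ fun _ _ => rfl
      ext k
      simp only [Finset.mem_filter, Finset.mem_range, Finset.mem_Ico]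
      omega
    have e3 : ∑ k ∈ Finset.Ico (a + 1) M, ρ ^ (k - a)
        = ∑ k ∈ Finset.range (M - (a + 1)), ρ ^ (k + 1) := by
      rw [Finset.sum_Ico_eq_sum_range]
      refine Finset.sum_congr rfl fun k hk => ?_
      congr 1
      omega
    rw [e1, e2, e3]
    exact geom_tail_le' hρ0 hρ1 _
  calc _ ≤ ρ / (1 - ρ) + ρ / (1 - ρ) := add_le_add hlow hhigh
    _ = 2 * ρ / (1 - ρ) := by ring

/-- Second-moment bound for a batch average of bounded random vectors whose
cross-correlations decay geometrically: if `‖X i‖ ≤ H` a.s. and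
`E⟪X i, X j⟫ ≤ Λ ρ^{|i-j|} H²` for `i ≠ j`, then
`E‖(1/M) ∑ X i‖² ≤ (H²/M)(1 + 2Λρ/(1−ρ))`. -/
theorem batch_second_moment_bound
    {Ω : Type*} [MeasurableSpace Ω] (P : Measure Ω) [IsProbabilityMeasure P]
    {E : Type*} [NormedAddCommGroup E] [InnerProductSpace ℝ E]
    (M : ℕ) (hM : 1 ≤ M)
    (X : Fin M → Ω → E)
    (hXmeas : ∀ i, AEStronglyMeasurable (X i) P)
    (H : ℝ) (hH : 0 ≤ H)
    (hXbd : ∀ i, ∀ᵐ ω ∂P, ‖X i ω‖ ≤ H)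
    (Λ ρ : ℝ) (hΛ : 0 ≤ Λ) (hρ0 : 0 ≤ ρ) (hρ1 : ρ < 1)
    (hcorr : ∀ i j : Fin M, i ≠ j →
      ∫ ω, ⟪X i ω, X j ω⟫ ∂P ≤ Λ * ρ ^ ((i : ℤ) - (j : ℤ)).natAbs * H ^ 2) :
    ∫ ω, ‖(M : ℝ)⁻¹ • (∑ i, X i ω)‖ ^ 2 ∂P
      ≤ (H ^ 2 / M) * (1 + 2 * Λ * ρ / (1 - ρ)) := by
  classical
  have hMpos : (0 : ℝ) < M := by exact_mod_cast hM
  -- integrability of each inner product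
  have hint : ∀ i j : Fin M, Integrable (fun ω => ⟪X i ω, X j ω⟫) P := by
    intro i j
    refine Integrable.mono' (integrable_const (H ^ 2)) ((hXmeas i).inner (hXmeas j)) ?_
    filter_upwards [hXbd i, hXbd j] with ω h1 h2
    calc ‖⟪X i ω, X j ω⟫‖ ≤ ‖X i ω‖ * ‖X j ω‖ := norm_inner_le_norm _ _
      _ ≤ H * H := mul_le_mul h1 h2 (norm_nonneg _) hH
      _ = H ^ 2 := (sq H).symm
  -- rewrite the integrand
  have hexp : ∀ ω, ‖(M : ℝ)⁻¹ • (∑ i, X i ω)‖ ^ 2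
      = (M : ℝ)⁻¹ ^ 2 * ∑ i, ∑ j, ⟪X i ω, X j ω⟫ := by
    intro ω
    have h : ‖∑ i, X i ω‖ ^ 2 = ∑ i, ∑ j, ⟪X i ω, X j ω⟫ := by
      rw [← real_inner_self_eq_norm_sq, inner_sum]
      simp only [sum_inner]
      rw [Finset.sum_comm]
    rw [norm_smul, mul_pow, h]
    norm_num
  have hI : ∫ ω, ‖(M : ℝ)⁻¹ • (∑ i, X i ω)‖ ^ 2 ∂P
      = (M : ℝ)⁻¹ ^ 2 * ∑ i, ∑ j, ∫ ω, ⟪X i ω, X j ω⟫ ∂P := by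
    simp_rw [hexp]
    rw [integral_const_mul, integral_finset_sum _ (fun i _ => integrable_finset_sum _
      (fun j _ => hint i j))]
    congr 1
    exact Finset.sum_congr rfl fun i _ => integral_finset_sum _ fun j _ => hint i j
  rw [hI]
  -- bound each row's sum of integrals
  have hdiag : ∀ i : Fin M, ∫ ω, ⟪X i ω, X i ω⟫ ∂P ≤ H ^ 2 := by
    intro i
    have : ∫ ω, ⟪X i ω, X i ω⟫ ∂P ≤ ∫ _, H ^ 2 ∂P := by
      refine integral_mono_ae (hint i i) (integrable_const _) ?_
      filter_upwards [hXbd i] with ω h1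
      rw [real_inner_self_eq_norm_sq]
      exact pow_le_pow_left₀ (norm_nonneg _) h1 2
    simpa using this
  have hrow : ∀ i : Fin M, ∑ j, ∫ ω, ⟪X i ω, X j ω⟫ ∂P
      ≤ H ^ 2 * (1 + 2 * Λ * ρ / (1 - ρ)) := by
    intro i
    rw [← Finset.add_sum_erase _ _ (Finset.mem_univ i)]
    have hoff : ∑ j ∈ Finset.univ.erase i, ∫ ω, ⟪X i ω, X j ω⟫ ∂P
        ≤ Λ * H ^ 2 * (2 * ρ / (1 - ρ)) := by
      calc ∑ j ∈ Finset.univ.erase i, ∫ ω, ⟪X i ω, X j ω⟫ ∂P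
          ≤ ∑ j ∈ Finset.univ.erase i, Λ * ρ ^ ((i : ℤ) - (j : ℤ)).natAbs * H ^ 2 :=
            Finset.sum_le_sum fun j hj =>
              hcorr i j (by simpa [ne_comm, eq_comm] using (Finset.mem_erase.mp hj).1)
        _ = Λ * H ^ 2 * ∑ j ∈ Finset.univ.erase i, ρ ^ ((i : ℤ) - (j : ℤ)).natAbs := by
            rw [Finset.mul_sum]; exact Finset.sum_congr rfl fun j _ => by ring
        _ ≤ Λ * H ^ 2 * (2 * ρ / (1 - ρ)) := by
            refine mul_le_mul_of_nonneg_left (row_sum_le' hρ0 hρ1 i) ?_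
            positivity
    calc _ ≤ H ^ 2 + Λ * H ^ 2 * (2 * ρ / (1 - ρ)) := add_le_add (hdiag i) hoff
      _ = H ^ 2 * (1 + 2 * Λ * ρ / (1 - ρ)) := by ring
  have hsum : ∑ i : Fin M, ∑ j, ∫ ω, ⟪X i ω, X j ω⟫ ∂P
      ≤ M * (H ^ 2 * (1 + 2 * Λ * ρ / (1 - ρ))) := by
    calc ∑ i : Fin M, ∑ j, ∫ ω, ⟪X i ω, X j ω⟫ ∂P
        ≤ ∑ _i : Fin M, H ^ 2 * (1 + 2 * Λ * ρ / (1 - ρ)) :=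
          Finset.sum_le_sum fun i _ => hrow i
      _ = M * (H ^ 2 * (1 + 2 * Λ * ρ / (1 - ρ))) := by
          rw [Finset.sum_const, Finset.card_univ, Fintype.card_fin, nsmul_eq_mul]
  calc (M : ℝ)⁻¹ ^ 2 * ∑ i, ∑ j, ∫ ω, ⟪X i ω, X j ω⟫ ∂P
      ≤ (M : ℝ)⁻¹ ^ 2 * (M * (H ^ 2 * (1 + 2 * Λ * ρ / (1 - ρ)))) := by
        refine mul_le_mul_of_nonneg_left hsum ?_
        positivity
    _ = (H ^ 2 / M) * (1 + 2 * Λ * ρ / (1 - ρ)) := by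
        field_simp
end

section
/- Let (Ω, P) be a probability space, d ≥ 1, M ≥ 1, and let u : Ω → EuclideanSpace ℝ (Fin d) be a measurable random vector with ‖u‖ ≤ 2R almost surely, R ≥ 0. Let B_0, …, B_{M−1} : Ω → Matrix (Fin d) (Fin d) ℝ be measurable random matrices with Frobenius norm ‖B_i‖_F ≤ 2 almost surely, and suppose there are constants Λ ≥ 0 and ρ ∈ [0,1) such that for all i ≠ j, E[trace(B_iᵀ B_j)] ≤ 4 Λ ρ^{|i−j|}. Then for every λ > 0, E⟨u, ((1/M) ∑_{i=0}^{M−1} B_i).mulVec u⟩ ≤ (λ/8) E‖u‖² + (32 R²/(λ M)) (1 + 2Λρ/(1−ρ)). -/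
open MeasureTheory Finset
open scoped RealInnerProductSpace

lemma mqnb_trace_eq {d : ℕ} (A C : Matrix (Fin d) (Fin d) ℝ) :
    Matrix.trace (A.transpose * C) = ∑ i, ∑ j, A i j * C i j := by
  simp only [Matrix.trace, Matrix.diag, Matrix.mul_apply, Matrix.transpose_apply]
  exact Finset.sum_comm

lemma mqnb_trace_abs_le {d : ℕ} (A C : Matrix (Fin d) (Fin d) ℝ) :
    |Matrix.trace (A.transpose * C)| ≤
      Real.sqrt (∑ i, ∑ j, A i j ^ 2) * Real.sqrt (∑ i, ∑ j, C i j ^ 2) := by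
  rw [mqnb_trace_eq]
  have h1 : (∑ i, ∑ j, A i j * C i j) = ∑ p : Fin d × Fin d, A p.1 p.2 * C p.1 p.2 := by
    rw [← Finset.sum_product']; rfl
  have h2 : (∑ i, ∑ j, A i j ^ 2) = ∑ p : Fin d × Fin d, A p.1 p.2 ^ 2 := by
    rw [← Finset.sum_product']; rfl
  have h3 : (∑ i, ∑ j, C i j ^ 2) = ∑ p : Fin d × Fin d, C p.1 p.2 ^ 2 := by
    rw [← Finset.sum_product']; rfl
  rw [h1, h2, h3]
  have hcs := Finset.sum_mul_sq_le_sq_mul_sq Finset.univ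
    (fun p : Fin d × Fin d => A p.1 p.2) (fun p : Fin d × Fin d => C p.1 p.2)
  have hA : (0:ℝ) ≤ ∑ p : Fin d × Fin d, A p.1 p.2 ^ 2 :=
    Finset.sum_nonneg fun _ _ => sq_nonneg _
  have hC : (0:ℝ) ≤ ∑ p : Fin d × Fin d, C p.1 p.2 ^ 2 :=
    Finset.sum_nonneg fun _ _ => sq_nonneg _
  calc |∑ p : Fin d × Fin d, A p.1 p.2 * C p.1 p.2|
      = Real.sqrt ((∑ p : Fin d × Fin d, A p.1 p.2 * C p.1 p.2) ^ 2) := by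
        rw [Real.sqrt_sq_eq_abs]
    _ ≤ Real.sqrt ((∑ p : Fin d × Fin d, A p.1 p.2 ^ 2) *
          ∑ p : Fin d × Fin d, C p.1 p.2 ^ 2) := Real.sqrt_le_sqrt hcs
    _ = _ := Real.sqrt_mul hA _

lemma mqnb_mulVec_norm_le {d : ℕ} (A : Matrix (Fin d) (Fin d) ℝ)
    (v : EuclideanSpace ℝ (Fin d)) :
    ‖(WithLp.equiv 2 (Fin d → ℝ)).symm (A.mulVec v)‖ ≤
      Real.sqrt (∑ i, ∑ j, A i j ^ 2) * ‖v‖ := by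
  have hv : ‖v‖ = Real.sqrt (∑ j, v j ^ 2) := by
    rw [EuclideanSpace.norm_eq]
    congr 1; apply Finset.sum_congr rfl; intro j _; rw [Real.norm_eq_abs, sq_abs]
  have hlhs : ‖(WithLp.equiv 2 (Fin d → ℝ)).symm (A.mulVec v)‖
      = Real.sqrt (∑ i, (∑ j, A i j * v j) ^ 2) := by
    rw [EuclideanSpace.norm_eq]
    congr 1; apply Finset.sum_congr rfl; intro i _
    rw [Real.norm_eq_abs, sq_abs]
    rfl
  rw [hv, hlhs, ← Real.sqrt_mul (show (0:ℝ) ≤ ∑ i, ∑ j, A i j ^ 2 from Finset.sum_nonneg fun _ _ =>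
    Finset.sum_nonneg fun _ _ => sq_nonneg _)]
  apply Real.sqrt_le_sqrt
  rw [Finset.sum_mul]
  apply Finset.sum_le_sum
  intro i _
  exact Finset.sum_mul_sq_le_sq_mul_sq Finset.univ (fun j => A i j) (fun j => v j)

lemma mqnb_geo_partial {ρ : ℝ} (h0 : 0 ≤ ρ) (h1 : ρ < 1) (n : ℕ) :
    ∑ k ∈ Finset.range n, ρ ^ (k + 1) ≤ ρ / (1 - ρ) := by
  have : ∑ k ∈ Finset.range n, ρ ^ (k + 1) = (∑ k ∈ Finset.range n, ρ ^ k) * ρ := by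
    rw [Finset.sum_mul]; exact Finset.sum_congr rfl fun k _ => (pow_succ ρ k)
  rw [this, div_eq_mul_inv, mul_comm ρ]
  apply mul_le_mul_of_nonneg_right _ h0
  calc (∑ k ∈ Finset.range n, ρ ^ k) ≤ ∑' k : ℕ, ρ ^ k :=
        Summable.sum_le_tsum _ (fun k _ => pow_nonneg h0 k) (summable_geometric_of_lt_one h0 h1)
    _ = (1 - ρ)⁻¹ := tsum_geometric_of_lt_one h0 h1

lemma mqnb_geo_nat {ρ : ℝ} (h0 : 0 ≤ ρ) (h1 : ρ < 1) (M a : ℕ) (ha : a < M) :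
    ∑ k ∈ Finset.range M,
      (if k = a then (0:ℝ) else ρ ^ ((a : ℤ) - (k : ℤ)).natAbs) ≤ 2 * (ρ / (1 - ρ)) := by
  set f : ℕ → ℝ := fun k => if k = a then (0:ℝ) else ρ ^ ((a : ℤ) - (k : ℤ)).natAbs with hf
  rw [Finset.range_eq_Ico, ← Finset.sum_Ico_consecutive f (Nat.zero_le a) ha.le]
  have e1 : ∑ k ∈ Finset.Ico 0 a, f k ≤ ρ / (1 - ρ) := by
    have : ∑ k ∈ Finset.Ico 0 a, f k = ∑ k ∈ Finset.range a, ρ ^ (a - k) := by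
      rw [← Finset.range_eq_Ico]
      apply Finset.sum_congr rfl
      intro k hk
      rw [Finset.mem_range] at hk
      have hne : k ≠ a := hk.ne
      have habs : ((a : ℤ) - (k : ℤ)).natAbs = a - k := by omega
      simp [hf, hne, habs]
    rw [this]
    have hrefl := Finset.sum_range_reflect (fun k => ρ ^ (k + 1)) a
    have : ∑ k ∈ Finset.range a, ρ ^ (a - k) = ∑ k ∈ Finset.range a, ρ ^ (k + 1) := by
      rw [← hrefl]
      apply Finset.sum_congr rfl
      intro k hk
      rw [Finset.mem_range] at hk
      congr 1
      omega
    rw [this]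
    exact mqnb_geo_partial h0 h1 a
  have e2 : ∑ k ∈ Finset.Ico a M, f k ≤ ρ / (1 - ρ) := by
    rw [Finset.sum_eq_sum_Ico_succ_bot ha f]
    have hfa : f a = 0 := by simp [hf]
    rw [hfa, zero_add, Finset.sum_Ico_eq_sum_range]
    have : ∑ k ∈ Finset.range (M - (a + 1)), f (a + 1 + k)
        = ∑ k ∈ Finset.range (M - (a + 1)), ρ ^ (k + 1) := by
      apply Finset.sum_congr rfl
      intro k _
      have hne : a + 1 + k ≠ a := by omega
      simp only [hf, if_neg hne]
      congr 1
      push_cast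
      omega
    rw [this]
    exact mqnb_geo_partial h0 h1 _
  linarith

set_option maxHeartbeats 2000000

/-- Markovian-noise bound for a quadratic term: if `‖u‖ ≤ 2R` a.s., each random matrix
`B i` has Frobenius norm at most `2` a.s., and the trace inner products of distinct
matrices decay geometrically, then
`E⟪u, ((1/M) ∑ B i) u⟫ ≤ (λ/8) E‖u‖² + (32R²/(λM))(1 + 2Λρ/(1−ρ))`. -/
theorem markovian_quadratic_noise_bound
    {Ω : Type*} [MeasurableSpace Ω] (P : Measure Ω) [IsProbabilityMeasure P]
    (d : ℕ) (hd : 1 ≤ d) (M : ℕ) (hM : 1 ≤ M)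
    (u : Ω → EuclideanSpace ℝ (Fin d))
    (B : Fin M → Ω → Matrix (Fin d) (Fin d) ℝ)
    (humeas : AEStronglyMeasurable u P)
    (hBmeas : ∀ k i j, AEStronglyMeasurable (fun ω => B k ω i j) P)
    (R : ℝ) (hR : 0 ≤ R)
    (hubd : ∀ᵐ ω ∂P, ‖u ω‖ ≤ 2 * R)
    (hBbd : ∀ k, ∀ᵐ ω ∂P, Real.sqrt (∑ i, ∑ j, (B k ω i j) ^ 2) ≤ 2)
    (Λ ρ : ℝ) (hΛ : 0 ≤ Λ) (hρ0 : 0 ≤ ρ) (hρ1 : ρ < 1)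
    (hcorr : ∀ i j : Fin M, i ≠ j →
      ∫ ω, Matrix.trace ((B i ω).transpose * B j ω) ∂P
        ≤ 4 * Λ * ρ ^ ((i : ℤ) - (j : ℤ)).natAbs)
    (lam : ℝ) (hlam : 0 < lam) :
    ∫ ω, ⟪u ω, (WithLp.equiv 2 (Fin d → ℝ)).symm
        (((M : ℝ)⁻¹ • ∑ i, B i ω).mulVec (u ω))⟫ ∂P
      ≤ (lam / 8) * ∫ ω, ‖u ω‖ ^ 2 ∂P
        + (32 * R ^ 2 / (lam * M)) * (1 + 2 * Λ * ρ / (1 - ρ)) := by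
  have hM0 : (0:ℝ) < M := by exact_mod_cast hM
  have hρ' : (0:ℝ) < 1 - ρ := by linarith
  -- the correlation functions
  set c : Fin M → Fin M → Ω → ℝ :=
    fun i j ω => Matrix.trace ((B i ω).transpose * B j ω) with hc
  -- measurability of c
  have hcmeas : ∀ i j, AEStronglyMeasurable (c i j) P := by
    intro i j
    have : c i j = fun ω => ∑ a, ∑ b, B i ω a b * B j ω a b := by
      funext ω; exact mqnb_trace_eq _ _
    rw [this]
    have hsum : AEStronglyMeasurable
        (∑ a : Fin d, ∑ b : Fin d, (fun ω => B i ω a b * B j ω a b)) P :=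
      Finset.aestronglyMeasurable_sum _ fun a _ =>
        Finset.aestronglyMeasurable_sum _ fun b _ => (hBmeas i a b).mul (hBmeas j a b)
    refine hsum.congr (Filter.Eventually.of_forall fun ω => ?_)
    simp [Finset.sum_apply]
  -- a.e. bound on all the B's simultaneously
  have hBae : ∀ᵐ ω ∂P, ∀ k, Real.sqrt (∑ i, ∑ j, (B k ω i j) ^ 2) ≤ 2 :=
    (ae_all_iff).mpr hBbd
  -- pointwise bound on c given the B bounds
  have hcpt : ∀ ω, (∀ k, Real.sqrt (∑ a, ∑ b, (B k ω a b) ^ 2) ≤ 2) →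
      ∀ i j, |c i j ω| ≤ 4 := by
    intro ω hω i j
    have h1 := mqnb_trace_abs_le (B i ω) (B j ω)
    have h2 := hω i
    have h3 := hω j
    have h4 : (0:ℝ) ≤ Real.sqrt (∑ a, ∑ b, (B i ω a b) ^ 2) := Real.sqrt_nonneg _
    have h5 : (0:ℝ) ≤ Real.sqrt (∑ a, ∑ b, (B j ω a b) ^ 2) := Real.sqrt_nonneg _
    nlinarith
  have hcb : ∀ i j, ∀ᵐ ω ∂P, |c i j ω| ≤ 4 := by
    intro i j
    filter_upwards [hBae] with ω hω
    exact hcpt ω hω i j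
  have hcint : ∀ i j, Integrable (c i j) P := by
    intro i j
    refine Integrable.mono' (integrable_const 4) (hcmeas i j) ?_
    filter_upwards [hcb i j] with ω hω
    simpa [Real.norm_eq_abs] using hω
  -- diagonal bound
  have hdiag : ∀ i, ∫ ω, c i i ω ∂P ≤ 4 := by
    intro i
    calc ∫ ω, c i i ω ∂P ≤ ∫ _, (4:ℝ) ∂P := by
          refine integral_mono_ae (hcint i i) (integrable_const 4) ?_
          filter_upwards [hcb i i] with ω hω
          exact (abs_le.mp hω).2
      _ = 4 := by simp
  -- per-row bound for the sums of integrals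
  have hjsum : ∀ i : Fin M, ∑ j, ∫ ω, c i j ω ∂P ≤ 4 + 4 * Λ * (2 * (ρ / (1 - ρ))) := by
    intro i
    have step1 : ∑ j, ∫ ω, c i j ω ∂P ≤
        ∑ j, (if j = i then (4:ℝ) else 4 * Λ * ρ ^ ((i : ℤ) - (j : ℤ)).natAbs) := by
      apply Finset.sum_le_sum
      intro j _
      by_cases h : j = i
      · subst h; simpa using hdiag j
      · simpa [h] using hcorr i j (Ne.symm h)
    have step2 : ∑ j, (if j = i then (4:ℝ) else 4 * Λ * ρ ^ ((i : ℤ) - (j : ℤ)).natAbs)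
        = 4 + 4 * Λ * ∑ j, (if j = i then (0:ℝ) else ρ ^ ((i : ℤ) - (j : ℤ)).natAbs) := by
      have hsplit : ∀ j : Fin M,
          (if j = i then (4:ℝ) else 4 * Λ * ρ ^ ((i : ℤ) - (j : ℤ)).natAbs)
          = (if j = i then (4:ℝ) else 0)
            + 4 * Λ * (if j = i then (0:ℝ) else ρ ^ ((i : ℤ) - (j : ℤ)).natAbs) := by
        intro j; by_cases h : j = i <;> simp [h]
      rw [Finset.sum_congr rfl fun j _ => hsplit j, Finset.sum_add_distrib,
        ← Finset.mul_sum]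
      congr 1
      simp
    have step3 : ∑ j : Fin M, (if j = i then (0:ℝ) else ρ ^ ((i : ℤ) - (j : ℤ)).natAbs)
        ≤ 2 * (ρ / (1 - ρ)) := by
      have hconv : ∑ j : Fin M, (if j = i then (0:ℝ) else ρ ^ ((i : ℤ) - (j : ℤ)).natAbs)
          = ∑ k ∈ Finset.range M,
              (if k = (i : ℕ) then (0:ℝ) else ρ ^ (((i : ℕ) : ℤ) - (k : ℤ)).natAbs) := by
        rw [← Fin.sum_univ_eq_sum_range
          (fun k => if k = (i : ℕ) then (0:ℝ) else ρ ^ (((i : ℕ) : ℤ) - (k : ℤ)).natAbs) M]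
        apply Finset.sum_congr rfl
        intro j _
        by_cases h : j = i
        · simp [h]
        · have h' : (j : ℕ) ≠ (i : ℕ) := fun hh => h (Fin.ext hh)
          simp [h, h']
      rw [hconv]
      exact mqnb_geo_nat hρ0 hρ1 M (i : ℕ) i.isLt
    calc ∑ j, ∫ ω, c i j ω ∂P
        ≤ 4 + 4 * Λ * ∑ j, (if j = i then (0:ℝ) else ρ ^ ((i : ℤ) - (j : ℤ)).natAbs) := by
          rw [← step2]; exact step1
      _ ≤ 4 + 4 * Λ * (2 * (ρ / (1 - ρ))) := by
          have h4Λ : (0:ℝ) ≤ 4 * Λ := by linarith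
          nlinarith [step3]
  -- double sum bound
  have hdd : ∑ i, ∑ j, ∫ ω, c i j ω ∂P ≤ M * (4 + 4 * Λ * (2 * (ρ / (1 - ρ)))) := by
    calc ∑ i, ∑ j, ∫ ω, c i j ω ∂P
        ≤ ∑ _i : Fin M, (4 + 4 * Λ * (2 * (ρ / (1 - ρ)))) :=
          Finset.sum_le_sum fun i _ => hjsum i
      _ = M * (4 + 4 * Λ * (2 * (ρ / (1 - ρ)))) := by
          rw [Finset.sum_const, Finset.card_univ, Fintype.card_fin, nsmul_eq_mul]
  -- the averaged matrix and its squared Frobenius norm (as a trace)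
  set T : Ω → ℝ := fun ω =>
    Matrix.trace ((((M:ℝ)⁻¹ • ∑ k, B k ω)).transpose * (((M:ℝ)⁻¹ • ∑ k, B k ω))) with hT
  have hTeq : ∀ ω, T ω = (M:ℝ)⁻¹ * ((M:ℝ)⁻¹ * ∑ i, ∑ j, c i j ω) := by
    intro ω
    simp only [hT, hc, Matrix.transpose_smul, Matrix.smul_mul, Matrix.mul_smul,
      Matrix.trace_smul, smul_eq_mul, Matrix.transpose_sum, Matrix.sum_mul,
      Matrix.mul_sum, Matrix.trace_sum]
    rw [← Finset.mul_sum]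
    congr 1
    congr 1
    exact Finset.sum_comm
  have hTint : Integrable T P := by
    have : T = fun ω => (M:ℝ)⁻¹ * ((M:ℝ)⁻¹ * ∑ i, ∑ j, c i j ω) := funext hTeq
    rw [this]
    exact (((integrable_finset_sum _ fun i _ =>
      integrable_finset_sum _ fun j _ => hcint i j).const_mul _).const_mul _)
  -- bound the integral of T
  have hTval : ∫ ω, T ω ∂P ≤ 4 / M * (1 + 2 * Λ * ρ / (1 - ρ)) := by
    have h1 : ∫ ω, T ω ∂P
        = (M:ℝ)⁻¹ * ((M:ℝ)⁻¹ * ∑ i, ∑ j, ∫ ω, c i j ω ∂P) := by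
      rw [show (fun ω => T ω) = fun ω => (M:ℝ)⁻¹ * ((M:ℝ)⁻¹ * ∑ i, ∑ j, c i j ω)
        from funext hTeq]
      rw [integral_const_mul, integral_const_mul,
        integral_finset_sum _ fun i _ => integrable_finset_sum _ fun j _ => hcint i j]
      congr 1
      congr 1
      apply Finset.sum_congr rfl
      intro i _
      exact integral_finset_sum _ fun j _ => hcint i j
    rw [h1]
    have h2 : (M:ℝ)⁻¹ * ((M:ℝ)⁻¹ * ∑ i, ∑ j, ∫ ω, c i j ω ∂P)
        ≤ (M:ℝ)⁻¹ * ((M:ℝ)⁻¹ * ((M:ℝ) * (4 + 4 * Λ * (2 * (ρ / (1 - ρ)))))) := by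
      have hMi : (0:ℝ) ≤ (M:ℝ)⁻¹ := by positivity
      exact mul_le_mul_of_nonneg_left (mul_le_mul_of_nonneg_left hdd hMi) hMi
    refine h2.trans (le_of_eq ?_)
    field_simp
  -- a.e. coordinatewise bound on T
  have hTpt : ∀ᵐ ω ∂P, 0 ≤ T ω ∧ T ω ≤ 4 := by
    filter_upwards [hBae] with ω hω
    constructor
    · have : T ω = ∑ i, ∑ j, ((M:ℝ)⁻¹ • ∑ k, B k ω) i j
          * ((M:ℝ)⁻¹ • ∑ k, B k ω) i j := mqnb_trace_eq _ _
      rw [this]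
      exact Finset.sum_nonneg fun i _ => Finset.sum_nonneg fun j _ => mul_self_nonneg _
    · rw [hTeq ω]
      have hb : ∀ i j : Fin M, c i j ω ≤ 4 := fun i j => (abs_le.mp (hcpt ω hω i j)).2
      have hsum : ∑ i, ∑ j, c i j ω ≤ (M:ℝ) * ((M:ℝ) * 4) := by
        calc ∑ i, ∑ j, c i j ω ≤ ∑ _i : Fin M, ((M:ℝ) * 4) := by
              apply Finset.sum_le_sum
              intro i _
              calc ∑ j, c i j ω ≤ ∑ _j : Fin M, (4:ℝ) := Finset.sum_le_sum fun j _ => hb i j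
                _ = (M:ℝ) * 4 := by
                  rw [Finset.sum_const, Finset.card_univ, Fintype.card_fin, nsmul_eq_mul]
          _ = (M:ℝ) * ((M:ℝ) * 4) := by
              rw [Finset.sum_const, Finset.card_univ, Fintype.card_fin, nsmul_eq_mul]
      have hMi : (0:ℝ) ≤ (M:ℝ)⁻¹ := by positivity
      have := mul_le_mul_of_nonneg_left (mul_le_mul_of_nonneg_left hsum hMi) hMi
      refine this.trans (le_of_eq ?_)
      field_simp
  -- the quadratic form
  set g : Ω → ℝ := fun ω => ⟪u ω, (WithLp.equiv 2 (Fin d → ℝ)).symm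
      (((M : ℝ)⁻¹ • ∑ i, B i ω).mulVec (u ω))⟫ with hg
  -- coordinates of u are measurable
  have hui : ∀ i0 : Fin d, AEStronglyMeasurable (fun ω => u ω i0) P := fun i0 =>
    (EuclideanSpace.proj (𝕜 := ℝ) i0).continuous.comp_aestronglyMeasurable humeas
  -- measurability of g
  have hgmeas : AEStronglyMeasurable g P := by
    have hgeq : g = fun ω => ∑ i0, u ω i0
        * ((M:ℝ)⁻¹ * ∑ j0, (∑ k, B k ω i0 j0) * u ω j0) := by
      funext ω
      simp only [hg, PiLp.inner_apply, RCLike.inner_apply, conj_trivial,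
        WithLp.equiv_symm_apply, PiLp.toLp_apply, Matrix.mulVec, dotProduct, Matrix.smul_apply,
        Finset.sum_apply, smul_eq_mul, Finset.mul_sum, Finset.sum_mul]
      apply Finset.sum_congr rfl
      intro a _
      apply Finset.sum_congr rfl
      intro b _
      rw [Matrix.sum_apply]
      rw [Finset.mul_sum, Finset.sum_mul, Finset.sum_mul]
      exact Finset.sum_congr rfl fun _ _ => by ring
    rw [hgeq]
    have hsum : AEStronglyMeasurable
        (∑ i0 : Fin d, (fun ω => u ω i0
          * ((M:ℝ)⁻¹ * ∑ j0, (∑ k, B k ω i0 j0) * u ω j0))) P := by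
      refine Finset.aestronglyMeasurable_sum _ fun i0 _ => ?_
      refine (hui i0).mul (AEStronglyMeasurable.const_mul ?_ _)
      have : AEStronglyMeasurable
          (∑ j0 : Fin d, (fun ω => (∑ k, B k ω i0 j0) * u ω j0)) P := by
        refine Finset.aestronglyMeasurable_sum _ fun j0 _ => ?_
        refine AEStronglyMeasurable.mul ?_ (hui j0)
        have : AEStronglyMeasurable (∑ k : Fin M, (fun ω => B k ω i0 j0)) P :=
          Finset.aestronglyMeasurable_sum _ fun k _ => hBmeas k i0 j0
        exact this.congr (Filter.Eventually.of_forall fun ω => by simp [Finset.sum_apply])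
      exact this.congr (Filter.Eventually.of_forall fun ω => by simp [Finset.sum_apply])
    exact hsum.congr (Filter.Eventually.of_forall fun ω => by simp [Finset.sum_apply])
  -- Young-type inequality
  have young : ∀ x y : ℝ, x * y ≤ lam / 8 * x ^ 2 + 2 / lam * y ^ 2 := by
    intro x y
    have key : 8 * lam * (x * y) ≤ 8 * lam * (lam / 8 * x ^ 2 + 2 / lam * y ^ 2) := by
      have heq : 8 * lam * (lam / 8 * x ^ 2 + 2 / lam * y ^ 2)
          = lam ^ 2 * x ^ 2 + 16 * y ^ 2 := by
        field_simp
        ring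
      rw [heq]
      nlinarith [sq_nonneg (lam * x - 4 * y)]
    have h8 : (0:ℝ) < 8 * lam := by positivity
    exact le_of_mul_le_mul_left key h8
  -- a.e. pointwise bound on g
  have hptwise : ∀ᵐ ω ∂P, g ω ≤ lam / 8 * ‖u ω‖ ^ 2 + 8 * R ^ 2 / lam * T ω := by
    filter_upwards [hubd, hTpt] with ω hu1 hT1
    set S := (M:ℝ)⁻¹ • ∑ k, B k ω with hS
    have hTS : T ω = ∑ i0, ∑ j0, S i0 j0 * S i0 j0 := mqnb_trace_eq S S
    have hF : Real.sqrt (∑ i0, ∑ j0, S i0 j0 ^ 2) = Real.sqrt (T ω) := by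
      rw [hTS]
      congr 1
      exact Finset.sum_congr rfl fun i0 _ => Finset.sum_congr rfl fun j0 _ => sq (S i0 j0)
    have step1 : g ω ≤ ‖u ω‖ * (Real.sqrt (T ω) * ‖u ω‖) := by
      calc g ω ≤ ‖u ω‖ * ‖(WithLp.equiv 2 (Fin d → ℝ)).symm (S.mulVec (u ω))‖ :=
            real_inner_le_norm _ _
        _ ≤ ‖u ω‖ * (Real.sqrt (∑ i0, ∑ j0, S i0 j0 ^ 2) * ‖u ω‖) :=
            mul_le_mul_of_nonneg_left (mqnb_mulVec_norm_le S (u ω)) (norm_nonneg _)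
        _ = ‖u ω‖ * (Real.sqrt (T ω) * ‖u ω‖) := by rw [hF]
    have step2 := young (‖u ω‖) (Real.sqrt (T ω) * ‖u ω‖)
    have hsq : (Real.sqrt (T ω) * ‖u ω‖) ^ 2 = T ω * ‖u ω‖ ^ 2 := by
      rw [mul_pow, Real.sq_sqrt hT1.1]
    have step3 : T ω * ‖u ω‖ ^ 2 ≤ T ω * (4 * R ^ 2) := by
      apply mul_le_mul_of_nonneg_left _ hT1.1
      have h2 : ‖u ω‖ ^ 2 ≤ (2 * R) ^ 2 := by
        apply pow_le_pow_left₀ (norm_nonneg _) hu1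
      nlinarith
    have h2lam : (0:ℝ) ≤ 2 / lam := by positivity
    calc g ω ≤ ‖u ω‖ * (Real.sqrt (T ω) * ‖u ω‖) := step1
      _ ≤ lam / 8 * ‖u ω‖ ^ 2 + 2 / lam * (Real.sqrt (T ω) * ‖u ω‖) ^ 2 := step2
      _ = lam / 8 * ‖u ω‖ ^ 2 + 2 / lam * (T ω * ‖u ω‖ ^ 2) := by rw [hsq]
      _ ≤ lam / 8 * ‖u ω‖ ^ 2 + 2 / lam * (T ω * (4 * R ^ 2)) := by
          exact add_le_add_right (mul_le_mul_of_nonneg_left step3 h2lam) _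
      _ = lam / 8 * ‖u ω‖ ^ 2 + 8 * R ^ 2 / lam * T ω := by
          field_simp
          ring
  -- integrability of ‖u‖²
  have hu2meas : AEStronglyMeasurable (fun ω => ‖u ω‖ ^ 2) P := by
    exact (humeas.norm.mul humeas.norm).congr
      (Filter.Eventually.of_forall fun ω => by simp [sq, Pi.mul_apply])
  have hu2int : Integrable (fun ω => ‖u ω‖ ^ 2) P := by
    refine Integrable.mono' (integrable_const (4 * R ^ 2)) hu2meas ?_
    filter_upwards [hubd] with ω hω
    rw [Real.norm_eq_abs, abs_of_nonneg (sq_nonneg _)]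
    nlinarith [norm_nonneg (u ω)]
  -- integrability of g
  have hgint : Integrable g P := by
    refine Integrable.mono' (integrable_const (8 * R ^ 2)) hgmeas ?_
    filter_upwards [hubd, hTpt] with ω hu1 hT1
    set S := (M:ℝ)⁻¹ • ∑ k, B k ω with hS
    have hTS : T ω = ∑ i0, ∑ j0, S i0 j0 * S i0 j0 := mqnb_trace_eq S S
    have hF : Real.sqrt (∑ i0, ∑ j0, S i0 j0 ^ 2) = Real.sqrt (T ω) := by
      rw [hTS]
      congr 1
      exact Finset.sum_congr rfl fun i0 _ => Finset.sum_congr rfl fun j0 _ => sq (S i0 j0)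
    have habs : |g ω| ≤ ‖u ω‖ * (Real.sqrt (T ω) * ‖u ω‖) := by
      calc |g ω| ≤ ‖u ω‖ * ‖(WithLp.equiv 2 (Fin d → ℝ)).symm (S.mulVec (u ω))‖ :=
            abs_real_inner_le_norm _ _
        _ ≤ ‖u ω‖ * (Real.sqrt (∑ i0, ∑ j0, S i0 j0 ^ 2) * ‖u ω‖) :=
            mul_le_mul_of_nonneg_left (mqnb_mulVec_norm_le S (u ω)) (norm_nonneg _)
        _ = ‖u ω‖ * (Real.sqrt (T ω) * ‖u ω‖) := by rw [hF]
    have hsT : Real.sqrt (T ω) ≤ 2 := by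
      rw [show (2:ℝ) = Real.sqrt 4 by
        rw [show (4:ℝ) = 2^2 by norm_num, Real.sqrt_sq (by norm_num)]]
      exact Real.sqrt_le_sqrt hT1.2
    rw [Real.norm_eq_abs]
    have hsTn : (0:ℝ) ≤ Real.sqrt (T ω) := Real.sqrt_nonneg _
    calc |g ω| ≤ ‖u ω‖ * (Real.sqrt (T ω) * ‖u ω‖) := habs
      _ ≤ (2 * R) * (2 * (2 * R)) := by
          apply mul_le_mul hu1 ?_ (mul_nonneg hsTn (norm_nonneg _)) (by positivity)
          exact mul_le_mul hsT hu1 (norm_nonneg _) (by norm_num)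
      _ = 8 * R ^ 2 := by ring
  -- put everything together
  have hrhsint : Integrable
      (fun ω => lam / 8 * ‖u ω‖ ^ 2 + 8 * R ^ 2 / lam * T ω) P :=
    (hu2int.const_mul _).add (hTint.const_mul _)
  calc ∫ ω, g ω ∂P
      ≤ ∫ ω, (lam / 8 * ‖u ω‖ ^ 2 + 8 * R ^ 2 / lam * T ω) ∂P :=
        integral_mono_ae hgint hrhsint hptwise
    _ = lam / 8 * ∫ ω, ‖u ω‖ ^ 2 ∂P + 8 * R ^ 2 / lam * ∫ ω, T ω ∂P := by
        rw [integral_add (hu2int.const_mul _) (hTint.const_mul _),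
          integral_const_mul, integral_const_mul]
    _ ≤ lam / 8 * ∫ ω, ‖u ω‖ ^ 2 ∂P
        + 8 * R ^ 2 / lam * (4 / M * (1 + 2 * Λ * ρ / (1 - ρ))) := by
        have hc8 : (0:ℝ) ≤ 8 * R ^ 2 / lam := by positivity
        exact add_le_add_right (mul_le_mul_of_nonneg_left hTval hc8) _
    _ = lam / 8 * ∫ ω, ‖u ω‖ ^ 2 ∂P
        + 32 * R ^ 2 / (lam * M) * (1 + 2 * Λ * ρ / (1 - ρ)) := by
        congr 1
        field_simp
        ring
end

section
/- Let (Ω, P) be a probability space and E a real inner product space. Let M ≥ 1, let u : Ω → E be a measurable random vector with E‖u‖² < ∞, and let v_0, …, v_{M−1} : Ω → E be measurable random vectors with ‖v_i‖ ≤ D almost surely for a constant D ≥ 0. Suppose there are constants Λ ≥ 0 and ρ ∈ [0,1) such that for all i ≠ j, E⟨v_i, v_j⟩ ≤ Λ ρ^{|i−j|} D². Then for every λ > 0, E⟨u, (1/M) ∑_{i=0}^{M−1} v_i⟩ ≤ (λ/8) E‖u‖² + (2 D²/(λ M)) (1 + 2Λρ/(1−ρ)). -/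
open MeasureTheory
open scoped RealInnerProductSpace

private lemma geom_range_le {ρ : ℝ} (h0 : 0 ≤ ρ) (h1 : ρ < 1) (n : ℕ) :
    ∑ k ∈ Finset.range n, ρ ^ k ≤ 1 / (1 - ρ) := by
  have hpos : 0 < 1 - ρ := by linarith
  rw [geom_sum_eq (by linarith : ρ ≠ 1)]
  have heq : (ρ ^ n - 1) / (ρ - 1) = (1 - ρ ^ n) / (1 - ρ) := by
    rw [← neg_sub 1 (ρ ^ n), ← neg_sub 1 ρ, neg_div_neg_eq]
  rw [heq, div_le_div_iff₀ hpos hpos]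
  nlinarith [pow_nonneg h0 n]

private lemma geom_Icc_le {ρ : ℝ} (h0 : 0 ≤ ρ) (h1 : ρ < 1) (n : ℕ) :
    ∑ k ∈ Finset.Icc 1 n, ρ ^ k ≤ ρ / (1 - ρ) := by
  have : Finset.Icc 1 n = Finset.Ico 1 (n + 1) := by
    ext x; simp [Nat.lt_succ_iff]
  rw [this, Finset.sum_Ico_eq_sum_range]
  simp only [Nat.add_sub_cancel]
  have h2 : ∑ k ∈ Finset.range n, ρ ^ (1 + k) = ρ * ∑ k ∈ Finset.range n, ρ ^ k := by
    rw [Finset.mul_sum]; exact Finset.sum_congr rfl fun k _ => by ring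
  rw [h2]
  calc ρ * ∑ k ∈ Finset.range n, ρ ^ k
      ≤ ρ * (1 / (1 - ρ)) := mul_le_mul_of_nonneg_left (geom_range_le h0 h1 n) h0
    _ = ρ / (1 - ρ) := by ring

/-- Markovian-noise bound for a linear term: if `E‖u‖² < ∞`, `‖v i‖ ≤ D` a.s. and the
correlations of distinct `v i, v j` decay geometrically, then for every `λ > 0`,
`E⟪u, (1/M) ∑ v i⟫ ≤ (λ/8) E‖u‖² + (2D²/(λM))(1 + 2Λρ/(1−ρ))`. -/
theorem markovian_linear_noise_bound
    {Ω : Type*} [MeasurableSpace Ω] (P : Measure Ω) [IsProbabilityMeasure P]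
    {E : Type*} [NormedAddCommGroup E] [InnerProductSpace ℝ E]
    (M : ℕ) (hM : 1 ≤ M)
    (u : Ω → E) (v : Fin M → Ω → E)
    (humeas : AEStronglyMeasurable u P)
    (hvmeas : ∀ i, AEStronglyMeasurable (v i) P)
    (huint : Integrable (fun ω => ‖u ω‖ ^ 2) P)
    (D : ℝ) (hD : 0 ≤ D)
    (hvbd : ∀ i, ∀ᵐ ω ∂P, ‖v i ω‖ ≤ D)
    (Λ ρ : ℝ) (hΛ : 0 ≤ Λ) (hρ0 : 0 ≤ ρ) (hρ1 : ρ < 1)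
    (hcorr : ∀ i j : Fin M, i ≠ j →
      ∫ ω, ⟪v i ω, v j ω⟫ ∂P ≤ Λ * ρ ^ ((i : ℤ) - (j : ℤ)).natAbs * D ^ 2)
    (lam : ℝ) (hlam : 0 < lam) :
    ∫ ω, ⟪u ω, (M : ℝ)⁻¹ • ∑ i, v i ω⟫ ∂P
      ≤ (lam / 8) * ∫ ω, ‖u ω‖ ^ 2 ∂P
        + (2 * D ^ 2 / (lam * M)) * (1 + 2 * Λ * ρ / (1 - ρ)) := by
  have hρpos : 0 < 1 - ρ := by linarith
  have hMpos : (0:ℝ) < M := by exact_mod_cast hM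
  set S : Ω → E := fun ω => (M : ℝ)⁻¹ • ∑ i, v i ω with hS
  -- measurability of S
  have hSmeas : AEStronglyMeasurable S P := by
    apply AEStronglyMeasurable.const_smul
    exact Finset.aestronglyMeasurable_fun_sum _ (fun i _ => hvmeas i)
  -- a.e. bound on S
  have hSbd : ∀ᵐ ω ∂P, ‖S ω‖ ≤ D := by
    have := ae_all_iff.2 hvbd
    filter_upwards [this] with ω hω
    calc ‖S ω‖ = (M:ℝ)⁻¹ * ‖∑ i, v i ω‖ := by
          rw [hS]; simp [norm_smul, abs_of_pos (inv_pos.2 hMpos)]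
      _ ≤ (M:ℝ)⁻¹ * ∑ i, ‖v i ω‖ := by
          exact mul_le_mul_of_nonneg_left (norm_sum_le _ _) (by positivity)
      _ ≤ (M:ℝ)⁻¹ * ∑ _i : Fin M, D := by
          gcongr with i; exact hω i
      _ = D := by
          simp [Finset.sum_const, Finset.card_univ]
          field_simp
  -- integrability of pairwise inner products
  have hint : ∀ i j : Fin M, Integrable (fun ω => ⟪v i ω, v j ω⟫) P := by
    intro i j
    apply Integrable.mono' (integrable_const (D * D))
      ((hvmeas i).inner (hvmeas j))
    filter_upwards [hvbd i, hvbd j] with ω h1 h2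
    calc ‖⟪v i ω, v j ω⟫‖ ≤ ‖v i ω‖ * ‖v j ω‖ := norm_inner_le_norm _ _
      _ ≤ D * D := by exact mul_le_mul h1 h2 (norm_nonneg _) hD
  -- integrability of ‖u‖
  have hunorm_int : Integrable (fun ω => ‖u ω‖) P := by
    have hb : Integrable (fun ω => ‖u ω‖ ^ 2 + 1) P := huint.add (integrable_const 1)
    apply Integrable.mono' hb humeas.norm
    filter_upwards with ω
    simp only [norm_norm]
    nlinarith [sq_nonneg (‖u ω‖ - 1), norm_nonneg (u ω)]
  -- integrability of ‖S‖²
  have hSsqmeas : AEStronglyMeasurable (fun ω => ‖S ω‖ ^ 2) P :=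
    (continuous_pow 2).comp_aestronglyMeasurable hSmeas.norm
  have hSsq_int : Integrable (fun ω => ‖S ω‖ ^ 2) P := by
    apply Integrable.mono' (integrable_const (D ^ 2)) hSsqmeas
    filter_upwards [hSbd] with ω hω
    have h0 : (0:ℝ) ≤ ‖S ω‖ := norm_nonneg _
    rw [Real.norm_eq_abs, abs_of_nonneg (by positivity)]
    nlinarith
  -- integrability of ⟪u, S⟫
  have huS_int : Integrable (fun ω => ⟪u ω, S ω⟫) P := by
    apply Integrable.mono' (hunorm_int.const_mul D) (humeas.inner hSmeas)
    filter_upwards [hSbd] with ω hω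
    calc ‖⟪u ω, S ω⟫‖ ≤ ‖u ω‖ * ‖S ω‖ := norm_inner_le_norm _ _
      _ ≤ ‖u ω‖ * D := by exact mul_le_mul_of_nonneg_left hω (norm_nonneg _)
      _ = D * ‖u ω‖ := by ring
  -- Step 1: pointwise Young-type inequality and integrate
  have step1 : ∫ ω, ⟪u ω, S ω⟫ ∂P
      ≤ (lam / 8) * (∫ ω, ‖u ω‖ ^ 2 ∂P) + (2 / lam) * ∫ ω, ‖S ω‖ ^ 2 ∂P := by
    have hb : Integrable (fun ω => (lam / 8) * ‖u ω‖ ^ 2 + (2 / lam) * ‖S ω‖ ^ 2) P :=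
      (huint.const_mul _).add (hSsq_int.const_mul _)
    have hmono : ∫ ω, ⟪u ω, S ω⟫ ∂P
        ≤ ∫ ω, ((lam / 8) * ‖u ω‖ ^ 2 + (2 / lam) * ‖S ω‖ ^ 2) ∂P := by
      apply integral_mono_ae huS_int hb
      filter_upwards with ω
      have h1 : ⟪u ω, S ω⟫ ≤ ‖u ω‖ * ‖S ω‖ := real_inner_le_norm _ _
      have h2 : (0:ℝ) ≤ (lam * ‖u ω‖ - 4 * ‖S ω‖) ^ 2 := sq_nonneg _
      have hl8 : (0:ℝ) < 8 * lam := by linarith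
      have key : (lam / 8) * ‖u ω‖ ^ 2 + (2 / lam) * ‖S ω‖ ^ 2 - ‖u ω‖ * ‖S ω‖
          = (lam * ‖u ω‖ - 4 * ‖S ω‖) ^ 2 / (8 * lam) := by
        field_simp; ring
      have hnn : (0:ℝ) ≤ (lam * ‖u ω‖ - 4 * ‖S ω‖) ^ 2 / (8 * lam) :=
        div_nonneg h2 hl8.le
      linarith
    calc ∫ ω, ⟪u ω, S ω⟫ ∂P
        ≤ ∫ ω, ((lam / 8) * ‖u ω‖ ^ 2 + (2 / lam) * ‖S ω‖ ^ 2) ∂P := hmono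
      _ = (lam / 8) * (∫ ω, ‖u ω‖ ^ 2 ∂P) + (2 / lam) * ∫ ω, ‖S ω‖ ^ 2 ∂P := by
          rw [integral_add (huint.const_mul _) (hSsq_int.const_mul _),
            integral_const_mul, integral_const_mul]
  -- Step 2: expand E‖S‖² as a double sum
  have step2 : ∫ ω, ‖S ω‖ ^ 2 ∂P
      = (M:ℝ)⁻¹ ^ 2 * ∑ i : Fin M, ∑ j : Fin M, ∫ ω, ⟪v i ω, v j ω⟫ ∂P := by
    have hpt : ∀ ω, ‖S ω‖ ^ 2
        = (M:ℝ)⁻¹ ^ 2 * ∑ i : Fin M, ∑ j : Fin M, ⟪v i ω, v j ω⟫ := by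
      intro ω
      rw [← real_inner_self_eq_norm_sq]
      simp only [hS, real_inner_smul_left, real_inner_smul_right, sum_inner, inner_sum]
      simp only [Finset.mul_sum]
      rw [Finset.sum_comm]
      exact Finset.sum_congr rfl fun i _ => Finset.sum_congr rfl fun j _ => by ring
    calc ∫ ω, ‖S ω‖ ^ 2 ∂P
        = ∫ ω, (M:ℝ)⁻¹ ^ 2 * ∑ i : Fin M, ∑ j : Fin M, ⟪v i ω, v j ω⟫ ∂P := by
          exact integral_congr_ae (Filter.Eventually.of_forall hpt)
      _ = (M:ℝ)⁻¹ ^ 2 * ∫ ω, ∑ i : Fin M, ∑ j : Fin M, ⟪v i ω, v j ω⟫ ∂P := by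
          rw [integral_const_mul]
      _ = (M:ℝ)⁻¹ ^ 2 * ∑ i : Fin M, ∑ j : Fin M, ∫ ω, ⟪v i ω, v j ω⟫ ∂P := by
          rw [integral_finset_sum _ (fun i _ => integrable_finset_sum _ (fun j _ => hint i j))]
          congr 1
          exact Finset.sum_congr rfl fun i _ => integral_finset_sum _ (fun j _ => hint i j)
  -- Step 3: off-diagonal geometric sums per row
  have hrow : ∀ i : Fin M,
      ∑ j ∈ Finset.univ.erase i, ρ ^ ((i : ℤ) - (j : ℤ)).natAbs ≤ 2 * (ρ / (1 - ρ)) := by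
    intro i
    classical
    have hmaps : ∀ j ∈ Finset.univ.erase i,
        (fun j : Fin M => ((i : ℤ) - (j : ℤ)).natAbs) j ∈ Finset.Icc 1 M := by
      intro j hj
      rw [Finset.mem_erase] at hj
      have hne : ((j : ℕ) : ℤ) ≠ ((i : ℕ) : ℤ) := by
        intro h
        exact hj.1 (Fin.ext (by exact_mod_cast h))
      have hi : ((i : ℕ) : ℤ) < M := by exact_mod_cast i.isLt
      have hj' : ((j : ℕ) : ℤ) < M := by exact_mod_cast j.isLt
      have hi0 : (0:ℤ) ≤ ((i : ℕ) : ℤ) := Int.ofNat_nonneg _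
      have hj0 : (0:ℤ) ≤ ((j : ℕ) : ℤ) := Int.ofNat_nonneg _
      simp only [Finset.mem_Icc]
      omega
    rw [← Finset.sum_fiberwise_of_maps_to hmaps]
    have hinner : ∀ k ∈ Finset.Icc 1 M,
        ∑ j ∈ (Finset.univ.erase i).filter
          (fun j : Fin M => ((i : ℤ) - (j : ℤ)).natAbs = k), ρ ^ ((i : ℤ) - (j : ℤ)).natAbs
        ≤ 2 * ρ ^ k := by
      intro k _
      have hconst : ∀ j ∈ (Finset.univ.erase i).filter
          (fun j : Fin M => ((i : ℤ) - (j : ℤ)).natAbs = k),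
          ρ ^ ((i : ℤ) - (j : ℤ)).natAbs = ρ ^ k := by
        intro j hj
        rw [Finset.mem_filter] at hj
        rw [hj.2]
      rw [Finset.sum_congr rfl hconst, Finset.sum_const, nsmul_eq_mul]
      have hcard : ((Finset.univ.erase i).filter
          (fun j : Fin M => ((i : ℤ) - (j : ℤ)).natAbs = k)).card ≤ 2 := by
        have hle : ((Finset.univ.erase i).filter
            (fun j : Fin M => ((i : ℤ) - (j : ℤ)).natAbs = k)).card
            ≤ ({(k : ℤ), -(k : ℤ)} : Finset ℤ).card := by
          apply Finset.card_le_card_of_injOn (fun j : Fin M => (i : ℤ) - (j : ℤ))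
          · intro j hj
            rw [Finset.mem_coe, Finset.mem_filter] at hj
            have := hj.2
            simp only [Finset.mem_coe, Finset.mem_insert, Finset.mem_singleton]
            rcases Int.natAbs_eq ((i : ℤ) - (j : ℤ)) with h | h
            · left; omega
            · right; omega
          · intro a _ b _ hab
            simp only at hab
            have h1 : ((a : ℕ) : ℤ) = ((b : ℕ) : ℤ) := by omega
            exact Fin.ext (by exact_mod_cast h1)
        refine hle.trans ?_
        refine (Finset.card_insert_le _ _).trans ?_
        simp
      have hpk : (0:ℝ) ≤ ρ ^ k := pow_nonneg hρ0 k
      exact mul_le_mul_of_nonneg_right (by exact_mod_cast hcard) hpk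
    have htot := Finset.sum_le_sum hinner
    have h2 : ∑ k ∈ Finset.Icc 1 M, 2 * ρ ^ k ≤ 2 * (ρ / (1 - ρ)) := by
      rw [← Finset.mul_sum]
      exact mul_le_mul_of_nonneg_left (geom_Icc_le hρ0 hρ1 M) (by norm_num)
    exact le_trans htot h2
  -- Step 4: bound the double sum
  have step4 : ∑ i : Fin M, ∑ j : Fin M, ∫ ω, ⟪v i ω, v j ω⟫ ∂P
      ≤ (M : ℝ) * D ^ 2 * (1 + 2 * Λ * ρ / (1 - ρ)) := by
    have hdiag : ∀ i : Fin M, ∫ ω, ⟪v i ω, v i ω⟫ ∂P ≤ D ^ 2 := by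
      intro i
      calc ∫ ω, ⟪v i ω, v i ω⟫ ∂P ≤ ∫ _ω, D ^ 2 ∂P := by
            apply integral_mono_ae (hint i i) (integrable_const _)
            filter_upwards [hvbd i] with ω hω
            have : ⟪v i ω, v i ω⟫ ≤ D ^ 2 := by
              rw [real_inner_self_eq_norm_sq]
              nlinarith [norm_nonneg (v i ω)]
            simpa using this
        _ = D ^ 2 := by simp
    have hrowbd : ∀ i : Fin M, ∑ j : Fin M, ∫ ω, ⟪v i ω, v j ω⟫ ∂P
        ≤ D ^ 2 + Λ * D ^ 2 * (2 * (ρ / (1 - ρ))) := by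
      intro i
      rw [← Finset.sum_erase_add _ _ (Finset.mem_univ i)]
      have hoff : ∑ j ∈ Finset.univ.erase i, ∫ ω, ⟪v i ω, v j ω⟫ ∂P
          ≤ Λ * D ^ 2 * (2 * (ρ / (1 - ρ))) := by
        calc ∑ j ∈ Finset.univ.erase i, ∫ ω, ⟪v i ω, v j ω⟫ ∂P
            ≤ ∑ j ∈ Finset.univ.erase i, Λ * ρ ^ ((i : ℤ) - (j : ℤ)).natAbs * D ^ 2 := by
              apply Finset.sum_le_sum
              intro j hj
              exact hcorr i j (Ne.symm (Finset.mem_erase.1 hj).1)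
            _ = Λ * D ^ 2 * ∑ j ∈ Finset.univ.erase i, ρ ^ ((i : ℤ) - (j : ℤ)).natAbs := by
              rw [Finset.mul_sum]; exact Finset.sum_congr rfl fun j _ => by ring
            _ ≤ Λ * D ^ 2 * (2 * (ρ / (1 - ρ))) :=
              mul_le_mul_of_nonneg_left (hrow i) (by positivity)
      linarith [hdiag i, hoff]
    calc ∑ i : Fin M, ∑ j : Fin M, ∫ ω, ⟪v i ω, v j ω⟫ ∂P
        ≤ ∑ _i : Fin M, (D ^ 2 + Λ * D ^ 2 * (2 * (ρ / (1 - ρ)))) :=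
          Finset.sum_le_sum fun i _ => hrowbd i
      _ = (M : ℝ) * (D ^ 2 + Λ * D ^ 2 * (2 * (ρ / (1 - ρ)))) := by
          simp [Finset.sum_const, Finset.card_univ]
          ring
      _ = (M : ℝ) * D ^ 2 * (1 + 2 * Λ * ρ / (1 - ρ)) := by
          field_simp
  -- combine
  have hSsq_bd : ∫ ω, ‖S ω‖ ^ 2 ∂P ≤ (D ^ 2 / M) * (1 + 2 * Λ * ρ / (1 - ρ)) := by
    rw [step2]
    have h1 : (0:ℝ) ≤ (M:ℝ)⁻¹ ^ 2 := by positivity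
    calc (M:ℝ)⁻¹ ^ 2 * ∑ i : Fin M, ∑ j : Fin M, ∫ ω, ⟪v i ω, v j ω⟫ ∂P
        ≤ (M:ℝ)⁻¹ ^ 2 * ((M : ℝ) * D ^ 2 * (1 + 2 * Λ * ρ / (1 - ρ))) :=
          mul_le_mul_of_nonneg_left step4 h1
      _ = (D ^ 2 / M) * (1 + 2 * Λ * ρ / (1 - ρ)) := by
          field_simp
  calc ∫ ω, ⟪u ω, (M : ℝ)⁻¹ • ∑ i, v i ω⟫ ∂P
      = ∫ ω, ⟪u ω, S ω⟫ ∂P := rfl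
    _ ≤ (lam / 8) * (∫ ω, ‖u ω‖ ^ 2 ∂P) + (2 / lam) * ∫ ω, ‖S ω‖ ^ 2 ∂P := step1
    _ ≤ (lam / 8) * (∫ ω, ‖u ω‖ ^ 2 ∂P)
        + (2 / lam) * ((D ^ 2 / M) * (1 + 2 * Λ * ρ / (1 - ρ))) := by
        have h2 : (0:ℝ) ≤ 2 / lam := by positivity
        have := mul_le_mul_of_nonneg_left hSsq_bd h2
        linarith
    _ = (lam / 8) * (∫ ω, ‖u ω‖ ^ 2 ∂P)
        + (2 * D ^ 2 / (lam * M)) * (1 + 2 * Λ * ρ / (1 - ρ)) := by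
        field_simp
end

section
/- Let (Ω, P) be a probability space, let Θ = ℝ^p and W = ℝ^q (Euclidean), and let M ≥ 1. For each t ∈ {0,…,M−1} let K_t : Ω → Θ → W → ℝ^q be measurable, and let θ, θ̃ : Ω → Θ and w, w̃ : Ω → W be random variables; let ω* : Θ → W be measurable. Assume constants L₄, L₅, C₂ ≥ 0 such that: (i) for every sample point, every t, every x ∈ Θ and y, y' ∈ W, ‖K_t(·, x, y) − K_t(·, x, y')‖ ≤ L₄ ‖y − y'‖; (ii) for every sample point, every t and x, x' ∈ Θ, ‖K_t(·, x, ω*(x)) − K_t(·, x', ω*(x'))‖ ≤ L₅ ‖x − x'‖; (iii) E‖(1/M) ∑_{s=0}^{M−1} K_s(·, θ̃, ω*(θ̃))‖² ≤ C₂/M. Fix t and define the random vector h := K_t(·, θ, w) − K_t(·, θ̃, w̃) + (1/M) ∑_{s=0}^{M−1} K_s(·, θ̃, w̃). Then, assuming all the squared norms appearing below are integrable, E‖h‖² ≤ 6 L₄² E‖w − ω*(θ)‖² + 9 L₄² E‖w̃ − ω*(θ̃)‖² + 6 L₅² E‖θ − θ̃‖² + 6 C₂/M. -/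
open MeasureTheory

/-- Carathéodory-type composition: if `G ω x` is a.e. strongly measurable in `ω` for each
fixed `x`, continuous in `x` for each `ω`, then `ω ↦ G ω (θ ω)` is a.e. strongly measurable. -/
lemma aesm_comp_caratheodory {Ω : Type*} [MeasurableSpace Ω] (P : Measure Ω)
    {p q : ℕ} (G : Ω → EuclideanSpace ℝ (Fin p) → EuclideanSpace ℝ (Fin q))
    (hmeas : ∀ x, AEStronglyMeasurable (fun ω => G ω x) P)
    (hcont : ∀ ω, Continuous (G ω))
    (θ : Ω → EuclideanSpace ℝ (Fin p)) (hθ : AEStronglyMeasurable θ P) :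
    AEStronglyMeasurable (fun ω => G ω (θ ω)) P := by
  set θm := hθ.mk θ with hθmdef
  have hθmSM : StronglyMeasurable θm := hθ.stronglyMeasurable_mk
  have hθmMeas : Measurable θm := hθmSM.measurable
  have hid : StronglyMeasurable (id : EuclideanSpace ℝ (Fin p) → EuclideanSpace ℝ (Fin p)) :=
    stronglyMeasurable_id
  set T : ℕ → SimpleFunc (EuclideanSpace ℝ (Fin p)) (EuclideanSpace ℝ (Fin p)) :=
    hid.approx with hT
  have hTto : ∀ x, Filter.Tendsto (fun n => T n x) Filter.atTop (nhds x) :=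
    hid.tendsto_approx
  set C : Set (EuclideanSpace ℝ (Fin p)) := ⋃ n, (↑(T n).range : Set (EuclideanSpace ℝ (Fin p)))
    with hC
  have hCc : C.Countable := Set.countable_iUnion fun n => ((T n).range).countable_toSet
  have hae : ∀ᵐ ω ∂P, ∀ c ∈ C, (hmeas c).mk _ ω = G ω c := by
    rw [ae_ball_iff hCc]
    exact fun c _ => (hmeas c).ae_eq_mk.symm
  have hae2 : ∀ᵐ ω ∂P, θ ω = θm ω := hθ.ae_eq_mk
  set ψ : ℕ → Ω → EuclideanSpace ℝ (Fin q) := fun n ω => (hmeas (T n (θm ω))).mk _ ω with hψ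
  have hψSM : ∀ n, StronglyMeasurable (ψ n) := by
    intro n
    have hrepr : ψ n = fun ω => ∑ c ∈ (T n).range,
        Set.indicator ((fun ω => T n (θm ω)) ⁻¹' {c}) (fun ω => (hmeas c).mk _ ω) ω := by
      funext ω
      rw [Finset.sum_eq_single_of_mem (T n (θm ω)) (SimpleFunc.mem_range_self _ _)]
      · rw [Set.indicator_of_mem]
        exact rfl
      · intro c hc hne
        rw [Set.indicator_of_notMem]
        simp only [Set.mem_preimage, Set.mem_singleton_iff]
        exact fun hcontra => hne hcontra.symm
    rw [hrepr]
    refine Finset.stronglyMeasurable_fun_sum _ fun c _ => ?_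
    exact ((hmeas c).stronglyMeasurable_mk).indicator
      (((T n).measurable.comp hθmMeas) (measurableSet_singleton c))
  have hconv : ∀ᵐ ω ∂P, Filter.Tendsto (fun n => ψ n ω) Filter.atTop (nhds (G ω (θ ω))) := by
    filter_upwards [hae, hae2] with ω hω hωθ
    have h1 : ∀ n, ψ n ω = G ω (T n (θm ω)) := fun n =>
      hω _ (Set.mem_iUnion.2 ⟨n, Finset.mem_coe.2 (SimpleFunc.mem_range_self _ _)⟩)
    simp only [h1, hωθ]
    exact ((hcont ω).tendsto (θm ω)).comp (hTto (θm ω))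
  exact aestronglyMeasurable_of_tendsto_ae Filter.atTop
    (fun n => (hψSM n).aestronglyMeasurable) hconv

/-- Elementary quadratic estimate used for the main bound. -/
lemma sq_bound_aux (x y z u n : ℝ) (hn : 0 ≤ n) (h : n ≤ x + y + 2 * z + u)
    (hx : 0 ≤ x) (hy : 0 ≤ y) (hz : 0 ≤ z) (hu : 0 ≤ u) :
    n ^ 2 ≤ 6 * x ^ 2 + 9 * z ^ 2 + 6 * y ^ 2 + 6 * u ^ 2 := by
  nlinarith [sq_nonneg (x - y), sq_nonneg (x - u), sq_nonneg (y - u),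
    sq_nonneg (3 * x - 2 * z), sq_nonneg (3 * y - 2 * z), sq_nonneg (3 * u - 2 * z),
    mul_self_le_mul_self hn h]

/-- Elementary quadratic estimate used for the integrability of the reference term. -/
lemma sq_bound_aux2 (x y z u n : ℝ) (hn : 0 ≤ n) (h : u ≤ n + x + y + 2 * z)
    (hx : 0 ≤ x) (hy : 0 ≤ y) (hz : 0 ≤ z) (hu : 0 ≤ u) :
    u ^ 2 ≤ 4 * n ^ 2 + 4 * x ^ 2 + 4 * y ^ 2 + 16 * z ^ 2 := by
  nlinarith [sq_nonneg (n - x), sq_nonneg (n - y), sq_nonneg (x - y),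
    sq_nonneg (n - 2 * z), sq_nonneg (x - 2 * z), sq_nonneg (y - 2 * z),
    mul_self_le_mul_self hu h]

/-- Second-moment bound for the variance-reduced critic update
`h = K t (θ, w) − K t (θ̃, w̃) + (1/M) ∑ₛ K s (θ̃, w̃)` (the paper's Lemma 4). -/
theorem critic_update_second_moment_bound
    {Ω : Type*} [MeasurableSpace Ω] (P : Measure Ω) [IsProbabilityMeasure P]
    (p q : ℕ) (M : ℕ) (hM : 1 ≤ M)
    (K : Fin M → Ω → EuclideanSpace ℝ (Fin p) → EuclideanSpace ℝ (Fin q) →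
      EuclideanSpace ℝ (Fin q))
    (θ θt : Ω → EuclideanSpace ℝ (Fin p)) (w wt : Ω → EuclideanSpace ℝ (Fin q))
    (ωstar : EuclideanSpace ℝ (Fin p) → EuclideanSpace ℝ (Fin q))
    (hKmeas : ∀ t x y, AEStronglyMeasurable (fun ω => K t ω x y) P)
    (hθmeas : AEStronglyMeasurable θ P) (hθtmeas : AEStronglyMeasurable θt P)
    (hwmeas : AEStronglyMeasurable w P) (hwtmeas : AEStronglyMeasurable wt P)
    (hωstar : Measurable ωstar)
    (L₄ L₅ C₂ : ℝ) (hL₄ : 0 ≤ L₄) (hL₅ : 0 ≤ L₅) (hC₂ : 0 ≤ C₂)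
    -- (i) Lipschitz continuity in the critic variable, per sample point:
    (hlip₄ : ∀ ω : Ω, ∀ t : Fin M, ∀ (x : EuclideanSpace ℝ (Fin p))
      (y y' : EuclideanSpace ℝ (Fin q)), ‖K t ω x y - K t ω x y'‖ ≤ L₄ * ‖y - y'‖)
    -- (ii) Lipschitz continuity of `x ↦ K t (x, ω*(x))`, per sample point:
    (hlip₅ : ∀ ω : Ω, ∀ t : Fin M, ∀ x x' : EuclideanSpace ℝ (Fin p),
      ‖K t ω x (ωstar x) - K t ω x' (ωstar x')‖ ≤ L₅ * ‖x - x'‖)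
    -- (iii) second-moment bound of the reference batch pseudo-gradient:
    (hvar : ∫ ω, ‖(M : ℝ)⁻¹ • ∑ s, K s ω (θt ω) (ωstar (θt ω))‖ ^ 2 ∂P ≤ C₂ / M)
    (t : Fin M)
    (h : Ω → EuclideanSpace ℝ (Fin q))
    (hh : ∀ ω, h ω = K t ω (θ ω) (w ω) - K t ω (θt ω) (wt ω)
      + (M : ℝ)⁻¹ • ∑ s, K s ω (θt ω) (wt ω))
    -- integrability of all the squared norms appearing below:
    (hint_h : Integrable (fun ω => ‖h ω‖ ^ 2) P)
    (hint₁ : Integrable (fun ω => ‖w ω - ωstar (θ ω)‖ ^ 2) P)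
    (hint₂ : Integrable (fun ω => ‖wt ω - ωstar (θt ω)‖ ^ 2) P)
    (hint₃ : Integrable (fun ω => ‖θ ω - θt ω‖ ^ 2) P) :
    ∫ ω, ‖h ω‖ ^ 2 ∂P
      ≤ 6 * L₄ ^ 2 * ∫ ω, ‖w ω - ωstar (θ ω)‖ ^ 2 ∂P
        + 9 * L₄ ^ 2 * ∫ ω, ‖wt ω - ωstar (θt ω)‖ ^ 2 ∂P
        + 6 * L₅ ^ 2 * ∫ ω, ‖θ ω - θt ω‖ ^ 2 ∂P
        + 6 * C₂ / M := by
  classical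
  have hMpos : (0 : ℝ) < (M : ℝ) := by exact_mod_cast hM
  -- the reference-batch pseudo-gradient at (θ̃, ω*(θ̃))
  set Gf : Ω → EuclideanSpace ℝ (Fin q) :=
    fun ω => (M : ℝ)⁻¹ • ∑ s, K s ω (θt ω) (ωstar (θt ω)) with hGfdef
  have hvar' : ∫ ω, ‖Gf ω‖ ^ 2 ∂P ≤ C₂ / M := hvar
  -- measurability of the reference term
  have hFa : ∀ s : Fin M,
      AEStronglyMeasurable (fun ω => K s ω (θt ω) (ωstar (θt ω))) P := by
    intro s
    refine aesm_comp_caratheodory P (fun ω x => K s ω x (ωstar x))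
      (fun x => hKmeas s x (ωstar x)) ?_ θt hθtmeas
    intro ω
    have hlw : LipschitzWith (Real.toNNReal L₅) (fun x => K s ω x (ωstar x)) := by
      refine LipschitzWith.of_dist_le_mul fun x x' => ?_
      rw [dist_eq_norm, dist_eq_norm]
      calc ‖K s ω x (ωstar x) - K s ω x' (ωstar x')‖ ≤ L₅ * ‖x - x'‖ := hlip₅ ω s x x'
        _ = (Real.toNNReal L₅ : ℝ) * ‖x - x'‖ := by rw [Real.coe_toNNReal L₅ hL₅]
    exact hlw.continuous
  have hGfm : AEStronglyMeasurable Gf P := by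
    have : AEStronglyMeasurable (fun ω => ∑ s, K s ω (θt ω) (ωstar (θt ω))) P :=
      Finset.aestronglyMeasurable_fun_sum _ fun s _ => hFa s
    exact this.fun_const_smul _
  -- key triangle-inequality estimate
  have htri : ∀ ω, ‖h ω - Gf ω‖ ≤ L₄ * ‖w ω - ωstar (θ ω)‖ + L₅ * ‖θ ω - θt ω‖
      + 2 * (L₄ * ‖wt ω - ωstar (θt ω)‖) := by
    intro ω
    have hdecomp : h ω - Gf ω =
        (K t ω (θ ω) (w ω) - K t ω (θ ω) (ωstar (θ ω)))
        + (K t ω (θ ω) (ωstar (θ ω)) - K t ω (θt ω) (ωstar (θt ω)))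
        + (K t ω (θt ω) (ωstar (θt ω)) - K t ω (θt ω) (wt ω))
        + (M : ℝ)⁻¹ • ∑ s, (K s ω (θt ω) (wt ω) - K s ω (θt ω) (ωstar (θt ω))) := by
      rw [hh ω, hGfdef]
      simp only [Finset.sum_sub_distrib, smul_sub]
      abel
    have h4 : ‖(M : ℝ)⁻¹ • ∑ s, (K s ω (θt ω) (wt ω) - K s ω (θt ω) (ωstar (θt ω)))‖
        ≤ L₄ * ‖wt ω - ωstar (θt ω)‖ := by
      rw [norm_smul, Real.norm_eq_abs, abs_of_nonneg (inv_nonneg.2 hMpos.le)]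
      have hsum : ‖∑ s, (K s ω (θt ω) (wt ω) - K s ω (θt ω) (ωstar (θt ω)))‖
          ≤ (M : ℝ) * (L₄ * ‖wt ω - ωstar (θt ω)‖) := by
        calc ‖∑ s, (K s ω (θt ω) (wt ω) - K s ω (θt ω) (ωstar (θt ω)))‖
            ≤ ∑ s : Fin M, ‖K s ω (θt ω) (wt ω) - K s ω (θt ω) (ωstar (θt ω))‖ :=
              norm_sum_le _ _
          _ ≤ ∑ _s : Fin M, L₄ * ‖wt ω - ωstar (θt ω)‖ :=
              Finset.sum_le_sum fun s _ => hlip₄ ω s _ _ _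
          _ = (M : ℝ) * (L₄ * ‖wt ω - ωstar (θt ω)‖) := by
              simp [Finset.sum_const, Finset.card_univ, nsmul_eq_mul]
      calc ((M : ℝ))⁻¹ * ‖∑ s, (K s ω (θt ω) (wt ω) - K s ω (θt ω) (ωstar (θt ω)))‖
          ≤ ((M : ℝ))⁻¹ * ((M : ℝ) * (L₄ * ‖wt ω - ωstar (θt ω)‖)) := by
            exact mul_le_mul_of_nonneg_left hsum (inv_nonneg.2 hMpos.le)
        _ = L₄ * ‖wt ω - ωstar (θt ω)‖ := by field_simp
    have h1 := hlip₄ ω t (θ ω) (w ω) (ωstar (θ ω))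
    have h2 := hlip₅ ω t (θ ω) (θt ω)
    have h3 : ‖K t ω (θt ω) (ωstar (θt ω)) - K t ω (θt ω) (wt ω)‖
        ≤ L₄ * ‖wt ω - ωstar (θt ω)‖ := by
      have := hlip₄ ω t (θt ω) (ωstar (θt ω)) (wt ω)
      rwa [norm_sub_rev (ωstar (θt ω))] at this
    rw [hdecomp]
    have htri4 := norm_add_le
      ((K t ω (θ ω) (w ω) - K t ω (θ ω) (ωstar (θ ω)))
        + (K t ω (θ ω) (ωstar (θ ω)) - K t ω (θt ω) (ωstar (θt ω)))
        + (K t ω (θt ω) (ωstar (θt ω)) - K t ω (θt ω) (wt ω)))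
      ((M : ℝ)⁻¹ • ∑ s, (K s ω (θt ω) (wt ω) - K s ω (θt ω) (ωstar (θt ω))))
    have htri3 := norm_add₃_le (a := K t ω (θ ω) (w ω) - K t ω (θ ω) (ωstar (θ ω)))
      (b := K t ω (θ ω) (ωstar (θ ω)) - K t ω (θt ω) (ωstar (θt ω)))
      (c := K t ω (θt ω) (ωstar (θt ω)) - K t ω (θt ω) (wt ω))
    linarith
  -- pointwise quadratic bound
  have hpt : ∀ ω, ‖h ω‖ ^ 2 ≤ 6 * L₄ ^ 2 * ‖w ω - ωstar (θ ω)‖ ^ 2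
      + 9 * L₄ ^ 2 * ‖wt ω - ωstar (θt ω)‖ ^ 2 + 6 * L₅ ^ 2 * ‖θ ω - θt ω‖ ^ 2
      + 6 * ‖Gf ω‖ ^ 2 := by
    intro ω
    have hgle : ‖h ω‖ ≤ L₄ * ‖w ω - ωstar (θ ω)‖ + L₅ * ‖θ ω - θt ω‖
        + 2 * (L₄ * ‖wt ω - ωstar (θt ω)‖) + ‖Gf ω‖ := by
      have := norm_add_le (h ω - Gf ω) (Gf ω)
      simp only [sub_add_cancel] at this
      linarith [htri ω]
    have key := sq_bound_aux (L₄ * ‖w ω - ωstar (θ ω)‖) (L₅ * ‖θ ω - θt ω‖)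
      (L₄ * ‖wt ω - ωstar (θt ω)‖) (‖Gf ω‖) (‖h ω‖) (norm_nonneg _)
      (by linarith) (mul_nonneg hL₄ (norm_nonneg _)) (mul_nonneg hL₅ (norm_nonneg _))
      (mul_nonneg hL₄ (norm_nonneg _)) (norm_nonneg _)
    nlinarith [key]
  -- integrability of the reference term's squared norm
  have hGint : Integrable (fun ω => ‖Gf ω‖ ^ 2) P := by
    have hbnd : Integrable (fun ω => 4 * ‖h ω‖ ^ 2 + 4 * L₄ ^ 2 * ‖w ω - ωstar (θ ω)‖ ^ 2
        + 4 * L₅ ^ 2 * ‖θ ω - θt ω‖ ^ 2 + 16 * L₄ ^ 2 * ‖wt ω - ωstar (θt ω)‖ ^ 2) P :=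
      (((hint_h.const_mul 4).add (hint₁.const_mul (4 * L₄ ^ 2))).add
        (hint₃.const_mul (4 * L₅ ^ 2))).add (hint₂.const_mul (16 * L₄ ^ 2))
    refine Integrable.mono' hbnd
      (((hGfm.norm.aemeasurable.pow_const 2).aestronglyMeasurable))
      (Filter.Eventually.of_forall fun ω => ?_)
    rw [Real.norm_eq_abs, abs_of_nonneg (by positivity)]
    have hgle : ‖Gf ω‖ ≤ ‖h ω‖ + (L₄ * ‖w ω - ωstar (θ ω)‖) + (L₅ * ‖θ ω - θt ω‖)
        + 2 * (L₄ * ‖wt ω - ωstar (θt ω)‖) := by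
      have := norm_sub_le (h ω) (h ω - Gf ω)
      simp only [sub_sub_cancel] at this
      linarith [htri ω]
    have key := sq_bound_aux2 (L₄ * ‖w ω - ωstar (θ ω)‖) (L₅ * ‖θ ω - θt ω‖)
      (L₄ * ‖wt ω - ωstar (θt ω)‖) (‖Gf ω‖) (‖h ω‖) (norm_nonneg _)
      (by linarith) (mul_nonneg hL₄ (norm_nonneg _)) (mul_nonneg hL₅ (norm_nonneg _))
      (mul_nonneg hL₄ (norm_nonneg _)) (norm_nonneg _)
    nlinarith [key]
  -- integrate the pointwise bound
  have hRHSint : Integrable (fun ω => 6 * L₄ ^ 2 * ‖w ω - ωstar (θ ω)‖ ^ 2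
      + 9 * L₄ ^ 2 * ‖wt ω - ωstar (θt ω)‖ ^ 2 + 6 * L₅ ^ 2 * ‖θ ω - θt ω‖ ^ 2
      + 6 * ‖Gf ω‖ ^ 2) P :=
    (((hint₁.const_mul (6 * L₄ ^ 2)).add (hint₂.const_mul (9 * L₄ ^ 2))).add
      (hint₃.const_mul (6 * L₅ ^ 2))).add (hGint.const_mul 6)
  have hmono : ∫ ω, ‖h ω‖ ^ 2 ∂P ≤ ∫ ω, (6 * L₄ ^ 2 * ‖w ω - ωstar (θ ω)‖ ^ 2
      + 9 * L₄ ^ 2 * ‖wt ω - ωstar (θt ω)‖ ^ 2 + 6 * L₅ ^ 2 * ‖θ ω - θt ω‖ ^ 2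
      + 6 * ‖Gf ω‖ ^ 2) ∂P :=
    integral_mono hint_h hRHSint hpt
  have hA : Integrable (fun ω => 6 * L₄ ^ 2 * ‖w ω - ωstar (θ ω)‖ ^ 2) P :=
    hint₁.const_mul _
  have hB : Integrable (fun ω => 9 * L₄ ^ 2 * ‖wt ω - ωstar (θt ω)‖ ^ 2) P :=
    hint₂.const_mul _
  have hC' : Integrable (fun ω => 6 * L₅ ^ 2 * ‖θ ω - θt ω‖ ^ 2) P :=
    hint₃.const_mul _
  have hAB : Integrable (fun ω => 6 * L₄ ^ 2 * ‖w ω - ωstar (θ ω)‖ ^ 2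
      + 9 * L₄ ^ 2 * ‖wt ω - ωstar (θt ω)‖ ^ 2) P := hA.add hB
  have hABC : Integrable (fun ω => 6 * L₄ ^ 2 * ‖w ω - ωstar (θ ω)‖ ^ 2
      + 9 * L₄ ^ 2 * ‖wt ω - ωstar (θt ω)‖ ^ 2 + 6 * L₅ ^ 2 * ‖θ ω - θt ω‖ ^ 2) P := hAB.add hC'
  rw [integral_add hABC (hGint.const_mul 6), integral_add hAB hC', integral_add hA hB,
    integral_const_mul, integral_const_mul, integral_const_mul, integral_const_mul] at hmono
  have hfinal : 6 * C₂ / (M : ℝ) = 6 * (C₂ / (M : ℝ)) := by ring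
  rw [hfinal]
  linarith [hvar']
end
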